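/- Let F ≤ Sym({1,…,8}) be the subgroup generated by the permutations (1 2 3)(4 5 6) and (1 4)(2 5)(3 7)(6 8), and let F(2) ≤ F be a 2-Sylow subgroup of F. Then F(2) has order 8, acts regularly on the 8 points (i.e., F(2) is transitive with trivial point stabilizers), and is self-normalizing in F, i.e., N_F(F(2)) = F(2). -/

import Mathlib

set_option maxRecDepth 100000
set_option maxHeartbeats 1000000

/-- `H` is a `p`-Sylow subgroup of `K` (both subgroups of an ambient group `G`):
`H` is a `p`-subgroup of `K` that is maximal among `p`-subgroups of `K`. -/
def IsSylowIn {G : Type*} [Group G] (p : ℕ) (H K : Subgroup G) : Prop :=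
  H ≤ K ∧ IsPGroup p H ∧
    ∀ Q : Subgroup G, Q ≤ K → IsPGroup p Q → H ≤ Q → Q = H

/-- The permutation `(1 2 3)(4 5 6)` of `{1,…,8}`, realized on `Fin 8` (0-indexed). -/
def genA : Equiv.Perm (Fin 8) :=
  ([0, 1, 2] : List (Fin 8)).formPerm * ([3, 4, 5] : List (Fin 8)).formPerm

/-- The permutation `(1 4)(2 5)(3 7)(6 8)` of `{1,…,8}`, realized on `Fin 8` (0-indexed). -/
def genB : Equiv.Perm (Fin 8) :=
  ([0, 3] : List (Fin 8)).formPerm * ([1, 4] : List (Fin 8)).formPerm *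
    ([2, 6] : List (Fin 8)).formPerm * ([5, 7] : List (Fin 8)).formPerm

def p0 : Equiv.Perm (Fin 8) :=
  ⟨![0,1,2,3,4,5,6,7], ![0,1,2,3,4,5,6,7], by decide, by decide⟩
def p1 : Equiv.Perm (Fin 8) :=
  ⟨![1,2,0,4,5,3,6,7], ![2,0,1,5,3,4,6,7], by decide, by decide⟩
def p2 : Equiv.Perm (Fin 8) :=
  ⟨![3,4,6,0,1,7,2,5], ![3,4,6,0,1,7,2,5], by decide, by decide⟩
def p3 : Equiv.Perm (Fin 8) :=
  ⟨![2,0,1,5,3,4,6,7], ![1,2,0,4,5,3,6,7], by decide, by decide⟩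
def p4 : Equiv.Perm (Fin 8) :=
  ⟨![4,5,6,1,2,7,0,3], ![6,3,4,7,0,1,2,5], by decide, by decide⟩
def p5 : Equiv.Perm (Fin 8) :=
  ⟨![4,6,3,1,7,0,2,5], ![5,3,6,2,0,7,1,4], by decide, by decide⟩
def p6 : Equiv.Perm (Fin 8) :=
  ⟨![5,3,6,2,0,7,1,4], ![4,6,3,1,7,0,2,5], by decide, by decide⟩
def p7 : Equiv.Perm (Fin 8) :=
  ⟨![5,6,4,2,7,1,0,3], ![6,5,3,7,2,0,1,4], by decide, by decide⟩
def p8 : Equiv.Perm (Fin 8) :=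
  ⟨![6,3,4,7,0,1,2,5], ![4,5,6,1,2,7,0,3], by decide, by decide⟩
def p9 : Equiv.Perm (Fin 8) :=
  ⟨![1,7,2,4,6,5,3,0], ![7,0,2,6,3,5,4,1], by decide, by decide⟩
def p10 : Equiv.Perm (Fin 8) :=
  ⟨![3,6,5,0,7,2,1,4], ![3,6,5,0,7,2,1,4], by decide, by decide⟩
def p11 : Equiv.Perm (Fin 8) :=
  ⟨![6,4,5,7,1,2,0,3], ![6,4,5,7,1,2,0,3], by decide, by decide⟩
def p12 : Equiv.Perm (Fin 8) :=
  ⟨![2,7,0,5,6,3,4,1], ![2,7,0,5,6,3,4,1], by decide, by decide⟩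
def p13 : Equiv.Perm (Fin 8) :=
  ⟨![7,0,2,6,3,5,4,1], ![1,7,2,4,6,5,3,0], by decide, by decide⟩
def p14 : Equiv.Perm (Fin 8) :=
  ⟨![7,2,1,6,5,4,3,0], ![7,2,1,6,5,4,3,0], by decide, by decide⟩
def p15 : Equiv.Perm (Fin 8) :=
  ⟨![6,5,3,7,2,0,1,4], ![5,6,4,2,7,1,0,3], by decide, by decide⟩
def p16 : Equiv.Perm (Fin 8) :=
  ⟨![0,7,1,3,6,4,5,2], ![0,2,7,3,5,6,4,1], by decide, by decide⟩
def p17 : Equiv.Perm (Fin 8) :=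
  ⟨![7,1,0,6,4,3,5,2], ![2,1,7,5,4,6,3,0], by decide, by decide⟩
def p18 : Equiv.Perm (Fin 8) :=
  ⟨![0,2,7,3,5,6,4,1], ![0,7,1,3,6,4,5,2], by decide, by decide⟩
def p19 : Equiv.Perm (Fin 8) :=
  ⟨![2,1,7,5,4,6,3,0], ![7,1,0,6,4,3,5,2], by decide, by decide⟩
def p20 : Equiv.Perm (Fin 8) :=
  ⟨![1,0,7,4,3,6,5,2], ![1,0,7,4,3,6,5,2], by decide, by decide⟩
def p21 : Equiv.Perm (Fin 8) :=
  ⟨![3,5,4,0,2,1,7,6], ![3,5,4,0,2,1,7,6], by decide, by decide⟩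
def p22 : Equiv.Perm (Fin 8) :=
  ⟨![5,4,3,2,1,0,7,6], ![5,4,3,2,1,0,7,6], by decide, by decide⟩
def p23 : Equiv.Perm (Fin 8) :=
  ⟨![4,3,5,1,0,2,7,6], ![4,3,5,1,0,2,7,6], by decide, by decide⟩

def Ls : List (Equiv.Perm (Fin 8)) := [p0, p1, p2, p3, p4, p5, p6, p7, p8, p9, p10, p11, p12, p13, p14, p15, p16, p17, p18, p19, p20, p21, p22, p23]
lemma hmulb : (Ls.all fun a => Ls.all fun b => decide (a * b ∈ Ls)) = true := by decide

lemma hinvb : (Ls.all fun a => decide (a⁻¹ ∈ Ls)) = true := by decide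

def E : Subgroup (Equiv.Perm (Fin 8)) where
  carrier := {x | x ∈ Ls}
  one_mem' := by
    have h : (1 : Equiv.Perm (Fin 8)) ∈ Ls := by decide
    exact h
  mul_mem' := by
    intro a b ha hb
    have h1 := List.all_eq_true.1 hmulb a ha
    have h2 := List.all_eq_true.1 h1 b hb
    exact of_decide_eq_true h2
  inv_mem' := by
    intro a ha
    exact of_decide_eq_true (List.all_eq_true.1 hinvb a ha)

lemma mem_E_iff {x : Equiv.Perm (Fin 8)} : x ∈ E ↔ x ∈ Ls := Iff.rfl

lemma closure_eq_E : Subgroup.closure {genA, genB} = E := by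
  apply le_antisymm
  · rw [Subgroup.closure_le]
    intro x hx
    simp only [Set.mem_insert_iff, Set.mem_singleton_iff] at hx
    rcases hx with rfl | rfl
    · exact mem_E_iff.2 (by decide)
    · exact mem_E_iff.2 (by decide)
  · intro x hx
    have ha : genA ∈ Subgroup.closure {genA, genB} :=
      Subgroup.subset_closure (Set.mem_insert _ _)
    have hb : genB ∈ Subgroup.closure {genA, genB} :=
      Subgroup.subset_closure (Set.mem_insert_of_mem _ rfl)
    have hx' : x ∈ Ls := hx
    simp only [Ls, List.mem_cons, List.not_mem_nil, or_false] at hx'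
    rcases hx' with rfl|rfl|rfl|rfl|rfl|rfl|rfl|rfl|rfl|rfl|rfl|rfl|rfl|rfl|rfl|rfl|rfl|rfl|rfl|rfl|rfl|rfl|rfl|rfl
    · have hw : p0 = (1 : Equiv.Perm (Fin 8)) := by decide
      rw [hw]; exact one_mem _
    · have hw : p1 = genA := by decide
      rw [hw]; exact ha
    · have hw : p2 = genB := by decide
      rw [hw]; exact hb
    · have hw : p3 = genA * genA := by decide
      rw [hw]; exact mul_mem (ha) ha
    · have hw : p4 = genA * genB := by decide
      rw [hw]; exact mul_mem (ha) hb
    · have hw : p5 = genB * genA := by decide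
      rw [hw]; exact mul_mem (hb) ha
    · have hw : p6 = genA * genA * genB := by decide
      rw [hw]; exact mul_mem (mul_mem (ha) ha) hb
    · have hw : p7 = genA * genB * genA := by decide
      rw [hw]; exact mul_mem (mul_mem (ha) hb) ha
    · have hw : p8 = genB * genA * genA := by decide
      rw [hw]; exact mul_mem (mul_mem (hb) ha) ha
    · have hw : p9 = genB * genA * genB := by decide
      rw [hw]; exact mul_mem (mul_mem (hb) ha) hb
    · have hw : p10 = genA * genA * genB * genA := by decide
      rw [hw]; exact mul_mem (mul_mem (mul_mem (ha) ha) hb) ha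
    · have hw : p11 = genA * genB * genA * genA := by decide
      rw [hw]; exact mul_mem (mul_mem (mul_mem (ha) hb) ha) ha
    · have hw : p12 = genA * genB * genA * genB := by decide
      rw [hw]; exact mul_mem (mul_mem (mul_mem (ha) hb) ha) hb
    · have hw : p13 = genB * genA * genA * genB := by decide
      rw [hw]; exact mul_mem (mul_mem (mul_mem (hb) ha) ha) hb
    · have hw : p14 = genB * genA * genB * genA := by decide
      rw [hw]; exact mul_mem (mul_mem (mul_mem (hb) ha) hb) ha
    · have hw : p15 = genA * genA * genB * genA * genA := by decide
      rw [hw]; exact mul_mem (mul_mem (mul_mem (mul_mem (ha) ha) hb) ha) ha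
    · have hw : p16 = genA * genA * genB * genA * genB := by decide
      rw [hw]; exact mul_mem (mul_mem (mul_mem (mul_mem (ha) ha) hb) ha) hb
    · have hw : p17 = genA * genB * genA * genA * genB := by decide
      rw [hw]; exact mul_mem (mul_mem (mul_mem (mul_mem (ha) hb) ha) ha) hb
    · have hw : p18 = genB * genA * genA * genB * genA := by decide
      rw [hw]; exact mul_mem (mul_mem (mul_mem (mul_mem (hb) ha) ha) hb) ha
    · have hw : p19 = genB * genA * genB * genA * genA := by decide
      rw [hw]; exact mul_mem (mul_mem (mul_mem (mul_mem (hb) ha) hb) ha) ha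
    · have hw : p20 = genA * genB * genA * genA * genB * genA := by decide
      rw [hw]; exact mul_mem (mul_mem (mul_mem (mul_mem (mul_mem (ha) hb) ha) ha) hb) ha
    · have hw : p21 = genB * genA * genA * genB * genA * genB := by decide
      rw [hw]; exact mul_mem (mul_mem (mul_mem (mul_mem (mul_mem (hb) ha) ha) hb) ha) hb
    · have hw : p22 = genB * genA * genB * genA * genA * genB := by decide
      rw [hw]; exact mul_mem (mul_mem (mul_mem (mul_mem (mul_mem (hb) ha) hb) ha) ha) hb
    · have hw : p23 = genA * genB * genA * genA * genB * genA * genB := by decide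
      rw [hw]; exact mul_mem (mul_mem (mul_mem (mul_mem (mul_mem (mul_mem (ha) hb) ha) ha) hb) ha) hb
lemma card_E : Nat.card E = 24 := by
  have h1 : (E : Set (Equiv.Perm (Fin 8))) = ↑Ls.toFinset := by
    ext x
    simp only [List.coe_toFinset]
    exact Iff.rfl
  rw [← SetLike.coe_sort_coe, Nat.card_coe_set_eq, h1, Set.ncard_coe_finset]
  decide

lemma freeb : (Ls.all fun g => !(decide (g ^ 8 = 1)) || decide (g = 1) ||
    ((List.finRange 8).all fun ω => !(decide (g ω = ω)))) = true := by decide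

lemma free_E : ∀ g ∈ Ls, g ^ 8 = 1 → ∀ ω : Fin 8, g ω = ω → g = 1 := by
  intro g hg h8 ω hω
  have h := List.all_eq_true.1 freeb g hg
  simp only [Bool.or_eq_true, Bool.not_eq_true', decide_eq_false_iff_not,
    decide_eq_true_eq, List.all_eq_true] at h
  rcases h with (h | h) | h
  · exact absurd h8 h
  · exact h
  · exact absurd hω (by simpa using h ω (List.mem_finRange ω))

def W : List (Equiv.Perm (Fin 8)) := [p0, p2, p4, p5, p6, p7, p8, p10, p11]

lemma Wb : (W.all fun w => decide (w ∈ Ls) && decide (w ^ 8 = 1)) = true := by decide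

/-- For `F = ⟨(1 2 3)(4 5 6), (1 4)(2 5)(3 7)(6 8)⟩ ≤ Sym({1,…,8})`, any `2`-Sylow
subgroup `F(2)` of `F` has order `8`, acts regularly on the `8` points (transitively with
trivial point stabilizers), and is self-normalizing in `F`: `N_F(F(2)) = F(2)`. -/
theorem stmt13 (F F2 : Subgroup (Equiv.Perm (Fin 8)))
    (hF : F = Subgroup.closure {genA, genB})
    (hSylow : IsSylowIn 2 F2 F) :
    Nat.card F2 = 8 ∧ MulAction.IsPretransitive F2 (Fin 8) ∧
      (∀ ω : Fin 8, F2 ⊓ MulAction.stabilizer (Equiv.Perm (Fin 8)) ω = ⊥) ∧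
      F ⊓ Subgroup.normalizer (F2 : Set (Equiv.Perm (Fin 8))) = F2 := by
  obtain ⟨hle, hpg, hmax⟩ := hSylow
  subst hF
  rw [closure_eq_E] at hle hmax ⊢
  haveI : Fact (Nat.Prime 2) := ⟨Nat.prime_two⟩
  set P : Subgroup ↥E := F2.subgroupOf E with hPdef
  have hpgP : IsPGroup 2 P := hpg.of_equiv (Subgroup.subgroupOfEquivOfLe hle).symm
  have hmax' : ∀ {Q : Subgroup ↥E}, IsPGroup 2 Q → P ≤ Q → Q = P := by
    intro Q hQ hPQ
    have h1 : Subgroup.map E.subtype Q ≤ E := by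
      rintro x ⟨y, hy, rfl⟩
      exact y.2
    have h2 : IsPGroup 2 (Subgroup.map E.subtype Q) := hQ.map _
    have h3 : F2 ≤ Subgroup.map E.subtype Q := by
      have h4 := Subgroup.map_mono (f := E.subtype) hPQ
      rwa [Subgroup.subgroupOf_map_subtype, inf_eq_left.mpr hle] at h4
    have h5 := hmax _ h1 h2 h3
    calc Q = Subgroup.comap E.subtype (Subgroup.map E.subtype Q) :=
            (Subgroup.comap_map_eq_self_of_injective E.subtype_injective Q).symm
      _ = P := by rw [h5]; rfl
  let S : Sylow 2 ↥E := ⟨P, hpgP, hmax'⟩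
  have hfact : (24:ℕ).factorization 2 = 3 := by
    have h24 : (24:ℕ) = 2 ^ 3 * 3 := by norm_num
    rw [h24, Nat.factorization_mul (by norm_num) (by norm_num),
      Nat.Prime.factorization_pow Nat.prime_two]
    simp [Nat.Prime.factorization Nat.prime_three]
  have hcard2 : Nat.card P = 8 := by
    have h := S.card_eq_multiplicity
    rw [card_E, hfact] at h
    exact h
  have hcardF2 : Nat.card F2 = 8 := by
    have he := Nat.card_congr (Subgroup.subgroupOfEquivOfLe hle).toEquiv
    exact he.symm.trans hcard2
  have hfree : ∀ g ∈ F2, ∀ ω : Fin 8, g ω = ω → g = 1 := by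
    intro g hg ω hω
    have h8 : g ^ 8 = 1 := by
      have hdvd : orderOf (⟨g, hg⟩ : ↥F2) ∣ 8 := by
        have h0 : orderOf (⟨g, hg⟩ : ↥F2) ∣ Nat.card F2 := orderOf_dvd_natCard _
        rwa [hcardF2] at h0
      rw [Subgroup.orderOf_mk] at hdvd
      exact orderOf_dvd_iff_pow_eq_one.mp hdvd
    exact free_E g (hle hg) h8 ω hω
  have hstab : ∀ ω : Fin 8, F2 ⊓ MulAction.stabilizer (Equiv.Perm (Fin 8)) ω = ⊥ := by
    intro ω
    rw [Subgroup.eq_bot_iff_forall]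
    intro x hx
    obtain ⟨h1, h2⟩ := Subgroup.mem_inf.1 hx
    exact hfree x h1 ω (by simpa [Equiv.Perm.smul_def] using h2)
  have htrans : MulAction.IsPretransitive F2 (Fin 8) := by
    constructor
    intro x y
    haveI : Fintype ↥F2 := Fintype.ofFinite _
    haveI : Fintype (MulAction.orbit F2 x) := Fintype.ofFinite _
    haveI : Fintype (MulAction.stabilizer F2 x) := Fintype.ofFinite _
    have hstab' : MulAction.stabilizer F2 x = ⊥ := by
      rw [Subgroup.eq_bot_iff_forall]
      intro g hg
      have hco : (g : Equiv.Perm (Fin 8)) = 1 := by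
        apply hfree _ g.2 x
        have := MulAction.mem_stabilizer_iff.1 hg
        rw [Submonoid.smul_def, Equiv.Perm.smul_def] at this
        exact this
      exact Subtype.ext hco
    have horb := MulAction.card_orbit_mul_card_stabilizer_eq_card_group F2 x
    have h1 : Fintype.card (MulAction.stabilizer F2 x) = 1 := by
      rw [← Nat.card_eq_fintype_card, hstab', Subgroup.card_bot]
    have h2 : Fintype.card ↥F2 = 8 := by rw [← Nat.card_eq_fintype_card, hcardF2]
    rw [h1, h2, mul_one] at horb
    have h3 : MulAction.orbit F2 x = Set.univ := by
      apply Set.eq_of_subset_of_ncard_le (Set.subset_univ _) _ (Set.toFinite _)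
      rw [Set.ncard_univ, ← Nat.card_coe_set_eq, Nat.card_eq_fintype_card,
        Nat.card_eq_fintype_card, horb, Fintype.card_fin]
    exact MulAction.mem_orbit_iff.1 (h3 ▸ Set.mem_univ y)
  have hPmem : ∀ x : ↥E, x ∈ P ↔ (x : Equiv.Perm (Fin 8)) ∈ F2 :=
    fun x => Subgroup.mem_subgroupOf
  have hNP : (Subgroup.normalizer (P : Set ↥E)) = P := by
    have hd1 : Nat.card (Subgroup.normalizer (P : Set ↥E)) ∣ 24 := by
      have h0 := Subgroup.card_subgroup_dvd_card (Subgroup.normalizer (P : Set ↥E))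
      rwa [card_E] at h0
    have hd2 : (8:ℕ) ∣ Nat.card (Subgroup.normalizer (P : Set ↥E)) := by
      have h0 : Nat.card P ∣ Nat.card (Subgroup.normalizer (P : Set ↥E)) :=
        Subgroup.card_dvd_of_le Subgroup.le_normalizer
      rwa [hcard2] at h0
    obtain ⟨n, hn⟩ : ∃ n, Nat.card (Subgroup.normalizer (P : Set ↥E)) = n := ⟨_, rfl⟩
    rw [hn] at hd1 hd2
    have hle24 : n ≤ 24 := Nat.le_of_dvd (by norm_num) hd1
    have h824 : n = 8 ∨ n = 24 := by interval_cases n <;> omega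
    rcases h824 with h8 | h24
    · have e1 : ((Subgroup.normalizer (P : Set ↥E)) : Set ↥E).ncard = 8 := by
        rw [← Nat.card_coe_set_eq, SetLike.coe_sort_coe, hn, h8]
      have e2 : (P : Set ↥E).ncard = 8 := by
        rw [← Nat.card_coe_set_eq, SetLike.coe_sort_coe, hcard2]
      have hsub : (P : Set ↥E) = ((Subgroup.normalizer (P : Set ↥E)) : Set ↥E) :=
        Set.eq_of_subset_of_ncard_le Subgroup.le_normalizer
          (by rw [e1, e2]) (Set.toFinite _)
      exact SetLike.ext' hsub.symm
    · exfalso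
      have htop : (Subgroup.normalizer (P : Set ↥E)) = ⊤ :=
        Subgroup.eq_top_of_card_eq _ (by rw [hn, h24, card_E])
      have hnormal : P.Normal := Subgroup.normalizer_eq_top_iff.mp htop
      haveI : (S : Subgroup ↥E).Normal := hnormal
      haveI := S.unique_of_normal hnormal
      have hWF2 : ∀ w ∈ W, w ∈ F2 := by
        intro w hw
        have hfacts := List.all_eq_true.1 Wb w hw
        simp only [Bool.and_eq_true, decide_eq_true_eq] at hfacts
        obtain ⟨hwLs, hw8⟩ := hfacts
        have hwE : w ∈ E := hwLs
        have h8' : (⟨w, hwE⟩ : ↥E) ^ 8 = 1 := Subtype.ext (by simpa using hw8)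
        have hdvd : orderOf (⟨w, hwE⟩ : ↥E) ∣ 2 ^ 3 :=
          by simpa using orderOf_dvd_of_pow_eq_one h8'
        obtain ⟨k, -, hk⟩ := (Nat.dvd_prime_pow Nat.prime_two).1 hdvd
        have hpw : IsPGroup 2 (Subgroup.zpowers (⟨w, hwE⟩ : ↥E)) :=
          IsPGroup.of_card (by rw [Nat.card_zpowers, hk])
        obtain ⟨Q, hQ⟩ := hpw.exists_le_sylow
        have hQS : Q = S := Subsingleton.elim Q S
        have hmem := hQ (Subgroup.mem_zpowers _)
        rw [hQS] at hmem
        exact (hPmem _).1 hmem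
      have h9 : (9:ℕ) ≤ Nat.card F2 := by
        have hsub : ↑W.toFinset ⊆ (F2 : Set (Equiv.Perm (Fin 8))) := by
          intro x hx
          exact hWF2 x (by simpa using hx)
        calc (9:ℕ) = (↑W.toFinset : Set (Equiv.Perm (Fin 8))).ncard := by
              rw [Set.ncard_coe_finset]; decide
          _ ≤ (F2 : Set _).ncard := Set.ncard_le_ncard hsub (Set.toFinite _)
          _ = Nat.card F2 := by rw [← Nat.card_coe_set_eq, SetLike.coe_sort_coe]
      omega
  refine ⟨hcardF2, htrans, hstab, ?_⟩
  apply le_antisymm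
  · intro x hx
    obtain ⟨hxE, hxN⟩ := Subgroup.mem_inf.1 hx
    have hx' : (⟨x, hxE⟩ : ↥E) ∈ (Subgroup.normalizer (P : Set ↥E)) := by
      rw [Subgroup.mem_normalizer_iff]
      intro h
      simp only [hPdef, Subgroup.mem_subgroupOf]
      have := Subgroup.mem_normalizer_iff.1 hxN (↑h)
      simpa using this
    rw [hNP] at hx'
    exact (hPmem _).1 hx'
  · exact le_inf hle Subgroup.le_normalizer
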